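/- Let n ≥ 1, let g be a real symmetric positive-definite n×n matrix with inverse g⁻¹, let y ∈ ℝⁿ, set a = g·y and t = (1/2)·yᵀ·g·y. Let c₁, c₂, c₃, d₁, d₂, d₃ ∈ ℝ satisfy c₁c₂ − c₃² ≠ 0, c₂ + 2d₂t ≠ 0, and Δ := (c₁+2d₁t)(c₂+2d₂t) − (c₃+2d₃t)² ≠ 0. Define the n×n matrices G_α = c_α·g + d_α·(a·aᵀ) for α = 1, 2, 3, and H_α = p_α·g⁻¹ + q_α·(y·yᵀ) for α = 1, 2, 3, where p₁ = c₂/(c₁c₂−c₃²), p₂ = c₁/(c₁c₂−c₃²), p₃ = −c₃/(c₁c₂−c₃²), q₁ = −(c₂d₁p₁ − c₃d₃p₁ − c₃d₂p₃ + c₂d₃p₃ + 2d₁d₂p₁t − 2d₃²p₁t)/Δ, q₂ = −(d₂p₂ + d₃p₃)/(c₂+2d₂t) + (c₃+2d₃t)·[(d₃p₁ + d₂p₃)(c₁+2d₁t) − (d₁p₁ + d₃p₃)(c₃+2d₃t)] / ((c₂+2d₂t)·Δ), and q₃ = −[(d₃p₁ + d₂p₃)(c₁+2d₁t) − (d₁p₁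 + d₃p₃)(c₃+2d₃t)]/Δ. Then G₁H₁ + G₃H₃ = I_n, G₁H₃ + G₃H₂ = 0, G₃H₁ + G₂H₃ = 0, and G₃H₃ + G₂H₂ = I_n; equivalently, the symmetric 2n×2n block matrix [[G₁, G₃], [G₃, G₂]] is invertible with inverse the block matrix [[H₁, H₃], [H₃, H₂]]. -/

import Mathlib

open Matrix

set_option maxHeartbeats 2000000 in
/-- Equations (4)–(5) of the paper: with the stated formulas for `p₁, p₂, p₃, q₁, q₂, q₃`,
the matrices `Hα = pα·g⁻¹ + qα·(y·yᵀ)` give the inverse of the block matrix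
`[[G₁, G₃], [G₃, G₂]]` of the general natural lifted metric, where
`Gα = cα·g + dα·(a·aᵀ)`, `a = g·y`, `t = (1/2)·yᵀ·g·y`. -/
theorem inverse_metric_blocks {n : ℕ} (hn : 1 ≤ n)
    (g : Matrix (Fin n) (Fin n) ℝ) (hg : g.PosDef)
    (y : Fin n → ℝ) (a : Fin n → ℝ) (ha : a = g.mulVec y)
    (t : ℝ) (ht : t = (1 / 2) * (y ⬝ᵥ g.mulVec y))
    (c₁ c₂ c₃ d₁ d₂ d₃ : ℝ)
    (h1 : c₁ * c₂ - c₃ ^ 2 ≠ 0) (h2 : c₂ + 2 * d₂ * t ≠ 0)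
    (Δ : ℝ)
    (hΔdef : Δ = (c₁ + 2 * d₁ * t) * (c₂ + 2 * d₂ * t) - (c₃ + 2 * d₃ * t) ^ 2)
    (hΔ : Δ ≠ 0)
    (p₁ p₂ p₃ q₁ q₂ q₃ : ℝ)
    (hp₁ : p₁ = c₂ / (c₁ * c₂ - c₃ ^ 2))
    (hp₂ : p₂ = c₁ / (c₁ * c₂ - c₃ ^ 2))
    (hp₃ : p₃ = -c₃ / (c₁ * c₂ - c₃ ^ 2))
    (hq₁ : q₁ = -(c₂ * d₁ * p₁ - c₃ * d₃ * p₁ - c₃ * d₂ * p₃ + c₂ * d₃ * p₃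
        + 2 * d₁ * d₂ * p₁ * t - 2 * d₃ ^ 2 * p₁ * t) / Δ)
    (hq₂ : q₂ = -(d₂ * p₂ + d₃ * p₃) / (c₂ + 2 * d₂ * t)
        + (c₃ + 2 * d₃ * t) * ((d₃ * p₁ + d₂ * p₃) * (c₁ + 2 * d₁ * t)
            - (d₁ * p₁ + d₃ * p₃) * (c₃ + 2 * d₃ * t)) / ((c₂ + 2 * d₂ * t) * Δ))
    (hq₃ : q₃ = -((d₃ * p₁ + d₂ * p₃) * (c₁ + 2 * d₁ * t)
        - (d₁ * p₁ + d₃ * p₃) * (c₃ + 2 * d₃ * t)) / Δ)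
    (G₁ G₂ G₃ H₁ H₂ H₃ : Matrix (Fin n) (Fin n) ℝ)
    (hG₁ : G₁ = c₁ • g + d₁ • vecMulVec a a)
    (hG₂ : G₂ = c₂ • g + d₂ • vecMulVec a a)
    (hG₃ : G₃ = c₃ • g + d₃ • vecMulVec a a)
    (hH₁ : H₁ = p₁ • g⁻¹ + q₁ • vecMulVec y y)
    (hH₂ : H₂ = p₂ • g⁻¹ + q₂ • vecMulVec y y)
    (hH₃ : H₃ = p₃ • g⁻¹ + q₃ • vecMulVec y y) :
    G₁ * H₁ + G₃ * H₃ = 1 ∧ G₁ * H₃ + G₃ * H₂ = 0 ∧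
    G₃ * H₁ + G₂ * H₃ = 0 ∧ G₃ * H₃ + G₂ * H₂ = 1 ∧
    fromBlocks G₁ G₃ G₃ G₂ * fromBlocks H₁ H₃ H₃ H₂ = 1 ∧
    fromBlocks H₁ H₃ H₃ H₂ * fromBlocks G₁ G₃ G₃ G₂ = 1 := by
  -- basic facts about g
  have hdet : g.det ≠ 0 := ne_of_gt hg.det_pos
  have hgg : g * g⁻¹ = 1 := mul_nonsing_inv g (isUnit_iff_ne_zero.mpr hdet)
  have hsym : gᵀ = g := by
    have h := hg.1
    simpa [Matrix.IsHermitian, Matrix.conjTranspose_eq_transpose_of_trivial] using h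
  have hs : ∀ u v, g u v = g v u := fun u v => (congrFun (congrFun hsym u) v).symm
  set Y := vecMulVec y y with hY
  -- vecMulVec a a = g * Y * g
  have hA : vecMulVec a a = g * Y * g := by
    subst ha
    ext i j
    simp only [hY, vecMulVec_apply, mul_apply, mulVec, dotProduct, Finset.sum_mul,
      Finset.mul_sum]
    refine Finset.sum_congr rfl fun k _ => Finset.sum_congr rfl fun l _ => ?_
    rw [hs k j]; ring
  -- Y * g * Y = (2t) • Y
  have hYgY : Y * g * Y = (2 * t) • Y := by
    have h2t : 2 * t = y ⬝ᵥ g.mulVec y := by rw [ht]; ring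
    rw [h2t]
    ext i j
    simp only [hY, vecMulVec_apply, mul_apply, mulVec, dotProduct, Finset.sum_mul,
      Finset.mul_sum, Matrix.smul_apply, smul_eq_mul]
    rw [Finset.sum_comm]
    refine Finset.sum_congr rfl fun k _ => Finset.sum_congr rfl fun l _ => ?_
    ring
  -- key product formula
  have key : ∀ c d p q : ℝ,
      (c • g + d • (g * Y * g)) * (p • g⁻¹ + q • Y)
        = (c * p) • (1 : Matrix (Fin n) (Fin n) ℝ)
          + (c * q + d * p + 2 * t * d * q) • (g * Y) := by
    intro c d p q
    have e1 : (g * Y * g) * g⁻¹ = g * Y := by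
      rw [mul_assoc, hgg, mul_one]
    have e2 : (g * Y * g) * Y = (2 * t) • (g * Y) := by
      rw [show (g * Y * g) * Y = g * (Y * g * Y) by simp only [mul_assoc], hYgY,
        mul_smul_comm]
    rw [add_mul, mul_add, mul_add, smul_mul_assoc, smul_mul_assoc, smul_mul_assoc,
      smul_mul_assoc, mul_smul_comm, mul_smul_comm, mul_smul_comm, mul_smul_comm,
      hgg, e1, e2]
    module
  rw [hA] at hG₁ hG₂ hG₃
  -- scalar identities for the p's
  have e1 : c₁ * p₁ + c₃ * p₃ = 1 := by
    rw [hp₁, hp₃]; field_simp; ring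
  have e2 : c₁ * p₃ + c₃ * p₂ = 0 := by
    rw [hp₂, hp₃]; field_simp; ring
  have e3 : c₃ * p₁ + c₂ * p₃ = 0 := by
    rw [hp₁, hp₃]; field_simp; ring
  have e4 : c₃ * p₃ + c₂ * p₂ = 1 := by
    rw [hp₂, hp₃]; field_simp; ring
  -- scalar identities for the q's
  subst hΔdef
  have hΔ' : (c₁ + 2 * d₁ * t) * (c₂ + 2 * d₂ * t) - (c₃ + 2 * d₃ * t) ^ 2 ≠ 0 := hΔ
  have hq₂' : q₂ * (c₂ + 2 * d₂ * t) = -(d₂ * p₂ + d₃ * p₃) - (c₃ + 2 * d₃ * t) * q₃ := by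
    rw [hq₂, hq₃]; generalize ((c₁ + 2 * d₁ * t) * (c₂ + 2 * d₂ * t) - (c₃ + 2 * d₃ * t) ^ 2) = D at hΔ' ⊢
    generalize c₂ + 2 * d₂ * t = E at h2 ⊢; field_simp; ring
  have hq₃' : q₃ * ((c₁ + 2 * d₁ * t) * (c₂ + 2 * d₂ * t) - (c₃ + 2 * d₃ * t) ^ 2)
      = -((d₃ * p₁ + d₂ * p₃) * (c₁ + 2 * d₁ * t)
          - (d₁ * p₁ + d₃ * p₃) * (c₃ + 2 * d₃ * t)) := by
    rw [hq₃, div_mul_cancel₀ _ hΔ']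
  have pid : (d₁ * p₃ + d₃ * p₂) * (c₂ + 2 * d₂ * t) - (c₃ + 2 * d₃ * t) * (d₂ * p₂ + d₃ * p₃)
      - ((d₃ * p₁ + d₂ * p₃) * (c₁ + 2 * d₁ * t)
          - (d₁ * p₁ + d₃ * p₃) * (c₃ + 2 * d₃ * t)) = 0 := by
    rw [hp₁, hp₂, hp₃]; field_simp; ring
  have s1 : (c₁ * q₁ + d₁ * p₁ + 2 * t * d₁ * q₁) + (c₃ * q₃ + d₃ * p₃ + 2 * t * d₃ * q₃) = 0 := by
    have hq1D : q₁ * ((c₁ + 2 * d₁ * t) * (c₂ + 2 * d₂ * t) - (c₃ + 2 * d₃ * t) ^ 2) = -(c₂ * d₁ * p₁ - c₃ * d₃ * p₁ - c₃ * d₂ * p₃ + c₂ * d₃ * p₃ + 2 * d₁ * d₂ * p₁ * t - 2 * d₃ ^ 2 * p₁ * t) := by rw [hq₁, div_mul_cancel₀ _ hΔ']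
    have hq3D : q₃ * ((c₁ + 2 * d₁ * t) * (c₂ + 2 * d₂ * t) - (c₃ + 2 * d₃ * t) ^ 2) = -((d₃ * p₁ + d₂ * p₃) * (c₁ + 2 * d₁ * t) - (d₁ * p₁ + d₃ * p₃) * (c₃ + 2 * d₃ * t)) := by rw [hq₃, div_mul_cancel₀ _ hΔ']
    have aux : (d₁ * p₁ + d₃ * p₃) * ((c₁ + 2 * d₁ * t) * (c₂ + 2 * d₂ * t) - (c₃ + 2 * d₃ * t) ^ 2) - (c₁ + 2 * t * d₁) * (c₂ * d₁ * p₁ - c₃ * d₃ * p₁ - c₃ * d₂ * p₃ + c₂ * d₃ * p₃ + 2 * d₁ * d₂ * p₁ * t - 2 * d₃ ^ 2 * p₁ * t) - (c₃ + 2 * t * d₃) * ((d₃ * p₁ + d₂ * p₃) * (c₁ + 2 * d₁ * t) - (d₁ * p₁ + d₃ * p₃) * (c₃ + 2 * d₃ * t)) = 0 := by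
      rw [hp₁, hp₃]; field_simp; ring
    have keyc : ((c₁ * q₁ + d₁ * p₁ + 2 * t * d₁ * q₁) + (c₃ * q₃ + d₃ * p₃ + 2 * t * d₃ * q₃)) * ((c₁ + 2 * d₁ * t) * (c₂ + 2 * d₂ * t) - (c₃ + 2 * d₃ * t) ^ 2) = 0 := by
      linear_combination (c₁ + 2 * t * d₁) * hq1D + (c₃ + 2 * t * d₃) * hq3D + aux
    exact (mul_eq_zero.mp keyc).resolve_right hΔ'
  have s3 : (c₃ * q₁ + d₃ * p₁ + 2 * t * d₃ * q₁) + (c₂ * q₃ + d₂ * p₃ + 2 * t * d₂ * q₃) = 0 := by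
    have hq1D : q₁ * ((c₁ + 2 * d₁ * t) * (c₂ + 2 * d₂ * t) - (c₃ + 2 * d₃ * t) ^ 2) = -(c₂ * d₁ * p₁ - c₃ * d₃ * p₁ - c₃ * d₂ * p₃ + c₂ * d₃ * p₃ + 2 * d₁ * d₂ * p₁ * t - 2 * d₃ ^ 2 * p₁ * t) := by rw [hq₁, div_mul_cancel₀ _ hΔ']
    have hq3D : q₃ * ((c₁ + 2 * d₁ * t) * (c₂ + 2 * d₂ * t) - (c₃ + 2 * d₃ * t) ^ 2) = -((d₃ * p₁ + d₂ * p₃) * (c₁ + 2 * d₁ * t) - (d₁ * p₁ + d₃ * p₃) * (c₃ + 2 * d₃ * t)) := by rw [hq₃, div_mul_cancel₀ _ hΔ']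
    have aux : (d₃ * p₁ + d₂ * p₃) * ((c₁ + 2 * d₁ * t) * (c₂ + 2 * d₂ * t) - (c₃ + 2 * d₃ * t) ^ 2) - (c₃ + 2 * t * d₃) * (c₂ * d₁ * p₁ - c₃ * d₃ * p₁ - c₃ * d₂ * p₃ + c₂ * d₃ * p₃ + 2 * d₁ * d₂ * p₁ * t - 2 * d₃ ^ 2 * p₁ * t) - (c₂ + 2 * t * d₂) * ((d₃ * p₁ + d₂ * p₃) * (c₁ + 2 * d₁ * t) - (d₁ * p₁ + d₃ * p₃) * (c₃ + 2 * d₃ * t)) = 0 := by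
      rw [hp₁, hp₃]; field_simp; ring
    have keyc : ((c₃ * q₁ + d₃ * p₁ + 2 * t * d₃ * q₁) + (c₂ * q₃ + d₂ * p₃ + 2 * t * d₂ * q₃)) * ((c₁ + 2 * d₁ * t) * (c₂ + 2 * d₂ * t) - (c₃ + 2 * d₃ * t) ^ 2) = 0 := by
      linear_combination (c₃ + 2 * t * d₃) * hq1D + (c₂ + 2 * t * d₂) * hq3D + aux
    exact (mul_eq_zero.mp keyc).resolve_right hΔ'
  have s4 : (c₃ * q₃ + d₃ * p₃ + 2 * t * d₃ * q₃) + (c₂ * q₂ + d₂ * p₂ + 2 * t * d₂ * q₂) = 0 := by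
    linear_combination hq₂'
  have s2 : (c₁ * q₃ + d₁ * p₃ + 2 * t * d₁ * q₃) + (c₃ * q₂ + d₃ * p₂ + 2 * t * d₃ * q₂) = 0 := by
    have keyc : ((c₁ * q₃ + d₁ * p₃ + 2 * t * d₁ * q₃)
        + (c₃ * q₂ + d₃ * p₂ + 2 * t * d₃ * q₂)) * (c₂ + 2 * d₂ * t) = 0 := by
      linear_combination (c₃ + 2 * d₃ * t) * hq₂' + hq₃' + pid
    exact (mul_eq_zero.mp keyc).resolve_right h2
  -- the four block equations
  have E1 : G₁ * H₁ + G₃ * H₃ = 1 := by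
    rw [hG₁, hH₁, hG₃, hH₃, key, key]
    rw [show (c₁ * p₁) • (1 : Matrix (Fin n) (Fin n) ℝ)
          + (c₁ * q₁ + d₁ * p₁ + 2 * t * d₁ * q₁) • (g * Y)
          + ((c₃ * p₃) • 1 + (c₃ * q₃ + d₃ * p₃ + 2 * t * d₃ * q₃) • (g * Y))
        = (c₁ * p₁ + c₃ * p₃) • (1 : Matrix (Fin n) (Fin n) ℝ)
          + ((c₁ * q₁ + d₁ * p₁ + 2 * t * d₁ * q₁)
              + (c₃ * q₃ + d₃ * p₃ + 2 * t * d₃ * q₃)) • (g * Y) from by module]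
    rw [e1, s1]; simp
  have E2 : G₁ * H₃ + G₃ * H₂ = 0 := by
    rw [hG₁, hH₃, hG₃, hH₂, key, key]
    rw [show (c₁ * p₃) • (1 : Matrix (Fin n) (Fin n) ℝ)
          + (c₁ * q₃ + d₁ * p₃ + 2 * t * d₁ * q₃) • (g * Y)
          + ((c₃ * p₂) • 1 + (c₃ * q₂ + d₃ * p₂ + 2 * t * d₃ * q₂) • (g * Y))
        = (c₁ * p₃ + c₃ * p₂) • (1 : Matrix (Fin n) (Fin n) ℝ)
          + ((c₁ * q₃ + d₁ * p₃ + 2 * t * d₁ * q₃)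
              + (c₃ * q₂ + d₃ * p₂ + 2 * t * d₃ * q₂)) • (g * Y) from by module]
    rw [e2, s2]; simp
  have E3 : G₃ * H₁ + G₂ * H₃ = 0 := by
    rw [hG₃, hH₁, hG₂, hH₃, key, key]
    rw [show (c₃ * p₁) • (1 : Matrix (Fin n) (Fin n) ℝ)
          + (c₃ * q₁ + d₃ * p₁ + 2 * t * d₃ * q₁) • (g * Y)
          + ((c₂ * p₃) • 1 + (c₂ * q₃ + d₂ * p₃ + 2 * t * d₂ * q₃) • (g * Y))
        = (c₃ * p₁ + c₂ * p₃) • (1 : Matrix (Fin n) (Fin n) ℝ)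
          + ((c₃ * q₁ + d₃ * p₁ + 2 * t * d₃ * q₁)
              + (c₂ * q₃ + d₂ * p₃ + 2 * t * d₂ * q₃)) • (g * Y) from by module]
    rw [e3, s3]; simp
  have E4 : G₃ * H₃ + G₂ * H₂ = 1 := by
    rw [hG₃, hH₃, hG₂, hH₂, key, key]
    rw [show (c₃ * p₃) • (1 : Matrix (Fin n) (Fin n) ℝ)
          + (c₃ * q₃ + d₃ * p₃ + 2 * t * d₃ * q₃) • (g * Y)
          + ((c₂ * p₂) • 1 + (c₂ * q₂ + d₂ * p₂ + 2 * t * d₂ * q₂) • (g * Y))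
        = (c₃ * p₃ + c₂ * p₂) • (1 : Matrix (Fin n) (Fin n) ℝ)
          + ((c₃ * q₃ + d₃ * p₃ + 2 * t * d₃ * q₃)
              + (c₂ * q₂ + d₂ * p₂ + 2 * t * d₂ * q₂)) • (g * Y) from by module]
    rw [e4, s4]; simp
  have B1 : fromBlocks G₁ G₃ G₃ G₂ * fromBlocks H₁ H₃ H₃ H₂ = 1 := by
    rw [fromBlocks_multiply, E1, E2, E3, E4, ← fromBlocks_one]
  refine ⟨E1, E2, E3, E4, B1, mul_eq_one_comm.mp B1⟩
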